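/- Fix y, s ∈ {0,1} and a ∈ 𝒜 with P(Y⁰=y, S=s) > 0 and P(A=a, Y⁰=y) > 0, and assume: consistency (P-almost surely, if D = 0 then Y = Y⁰); Y⁰ is conditionally independent of (A, D) given (X, S) (for all y', d, a', x, s' with P(X=x, S=s') > 0, P(Y⁰=y', A=a', D=d | X=x, S=s') = P(Y⁰=y' | X=x, S=s') · P(A=a', D=d | X=x, S=s')); Y⁰ is conditionally independent of (A, D) given X (for all y', d, a', x with P(X=x) > 0, P(Y⁰=y', A=a', D=d | X=x) = P(Y⁰=y' | X=x) · P(A=a', D=d | X=x)); positivity given (X,S) (P(D=0, S=s', X=x) > 0 whenever P(S=s', X=x) > 0); and positivity given X (P(D=0, X=x) > 0 whenever P(X=x) > 0). Then the conditional-probability ratio appearing in the factored counterfactual error rates is identified from observed data as: P(A=a | Y⁰=y, S=s) / P(A=a | Y⁰=y) = ( E[μ₀(y,s,X) · 1{A=a} · 1{S=s}] / E[μ₀(y,s,X) · 1{S=s}] ) / ( E[μ₀*(y,X) · h(X,a)] / E[μ₀*(y,X)] ). -/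

import Mathlib

open MeasureTheory

/-- `pr P E` is the probability of the event `E` as a real number. -/
noncomputable def pr {Ω : Type*} [MeasurableSpace Ω] (P : Measure Ω) (E : Set Ω) : ℝ :=
  (P E).toReal

/-- `cpr P E F = P(E | F) = P(E ∩ F) / P(F)`, the conditional probability of `E` given `F`. -/
noncomputable def cpr {Ω : Type*} [MeasurableSpace Ω] (P : Measure Ω) (E F : Set Ω) : ℝ :=
  pr P (E ∩ F) / pr P F

section helpers
variable {Ω : Type*} [MeasurableSpace Ω] {P : Measure Ω} [IsFiniteMeasure P]

lemma msE {β : Type*} [MeasurableSpace β] [MeasurableSingletonClass β]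
    {f : Ω → β} (hf : Measurable f) (b : β) : MeasurableSet {ω | f ω = b} :=
  hf (measurableSet_singleton b)

lemma pr_nonneg (E : Set Ω) : 0 ≤ pr P E := ENNReal.toReal_nonneg

lemma pr_mono {E F : Set Ω} (h : E ⊆ F) : pr P E ≤ pr P F :=
  ENNReal.toReal_mono (measure_ne_top P F) (measure_mono h)

lemma pr_eq_zero_of_subset {E F : Set Ω} (h : E ⊆ F) (hF : pr P F = 0) : pr P E = 0 :=
  le_antisymm (hF ▸ pr_mono h) (pr_nonneg E)

lemma pr_iUnion {ι : Type*} [Countable ι] {f : ι → Set Ω}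
    (hm : ∀ i, MeasurableSet (f i)) (hd : Pairwise (Function.onFun Disjoint f)) :
    pr P (⋃ i, f i) = ∑' i, pr P (f i) := by
  simp only [pr]
  rw [measure_iUnion hd hm, ENNReal.tsum_toReal_eq (fun i => measure_ne_top P _)]

lemma pr_union {E F : Set Ω} (hm : MeasurableSet F) (hd : Disjoint E F) :
    pr P (E ∪ F) = pr P E + pr P F := by
  simp only [pr]
  rw [measure_union hd hm, ENNReal.toReal_add (measure_ne_top P _) (measure_ne_top P _)]

lemma pr_tsum_fiber {𝒳 : Type*} [Countable 𝒳] [MeasurableSpace 𝒳] [MeasurableSingletonClass 𝒳]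
    {f : Ω → 𝒳} (hf : Measurable f) {E : Set Ω} (hE : MeasurableSet E) :
    ∑' x, pr P (E ∩ {ω | f ω = x}) = pr P E := by
  rw [← pr_iUnion (fun x => hE.inter (msE hf x)) ?_]
  · congr 1; ext ω; simp
  · intro i j hij
    simp only [Function.onFun, Set.disjoint_left]
    rintro ω ⟨-, h1⟩ ⟨-, h2⟩
    exact hij ((h1 : f ω = i).symm.trans h2 : i = j)
end helpers

lemma ci_factor {Ω 𝒜 : Type*} [MeasurableSpace Ω]
    [MeasurableSpace 𝒜] [MeasurableSingletonClass 𝒜] [Countable 𝒜]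
    (P : Measure Ω) [IsProbabilityMeasure P]
    (Y0 D : Ω → Bool) (A : Ω → 𝒜)
    (hY0 : Measurable Y0) (hD : Measurable D) (hA : Measurable A)
    (F : Set Ω) (hF : MeasurableSet F) (hFpos : 0 < pr P F)
    (y : Bool) (a : 𝒜)
    (hCI : ∀ (d : Bool) (a' : 𝒜),
      cpr P {ω | Y0 ω = y ∧ A ω = a' ∧ D ω = d} F =
        cpr P {ω | Y0 ω = y} F * cpr P {ω | A ω = a' ∧ D ω = d} F) :
    pr P ({ω | Y0 ω = y ∧ D ω = false} ∩ F) * pr P F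
        = pr P ({ω | Y0 ω = y} ∩ F) * pr P ({ω | D ω = false} ∩ F)
    ∧ pr P ({ω | Y0 ω = y ∧ A ω = a} ∩ F) * pr P F
        = pr P ({ω | Y0 ω = y} ∩ F) * pr P ({ω | A ω = a} ∩ F) := by
  have hFne : pr P F ≠ 0 := ne_of_gt hFpos
  have key : ∀ (d : Bool) (a' : 𝒜),
      pr P ({ω | Y0 ω = y ∧ A ω = a' ∧ D ω = d} ∩ F)
        = pr P ({ω | Y0 ω = y} ∩ F) / pr P F * pr P ({ω | A ω = a' ∧ D ω = d} ∩ F) := by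
    intro d a'
    have h := hCI d a'
    unfold cpr at h
    field_simp at h
    have h2 : pr P ({ω | Y0 ω = y ∧ A ω = a' ∧ D ω = d} ∩ F) * pr P F
        = pr P ({ω | Y0 ω = y} ∩ F) * pr P ({ω | A ω = a' ∧ D ω = d} ∩ F) :=
      mul_right_cancel₀ hFne (by linear_combination (pr P F) * h)
    field_simp
    linarith [h2]
  constructor
  · have hL : pr P ({ω | Y0 ω = y ∧ D ω = false} ∩ F)
        = ∑' a', pr P ({ω | Y0 ω = y ∧ A ω = a' ∧ D ω = false} ∩ F) := by
      have hset : ∀ a', {ω | Y0 ω = y ∧ A ω = a' ∧ D ω = false} ∩ F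
          = ({ω | Y0 ω = y ∧ D ω = false} ∩ F) ∩ {ω | A ω = a'} := by
        intro a'; ext ω
        simp only [Set.mem_inter_iff, Set.mem_setOf_eq]
        tauto
      rw [← pr_tsum_fiber (E := {ω | Y0 ω = y ∧ D ω = false} ∩ F) hA (((msE hY0 y).inter (msE hD false)).inter hF)]
      exact tsum_congr fun a' => by rw [hset a']
    have hR : pr P ({ω | D ω = false} ∩ F)
        = ∑' a', pr P ({ω | A ω = a' ∧ D ω = false} ∩ F) := by
      have hset : ∀ a', {ω | A ω = a' ∧ D ω = false} ∩ F
          = ({ω | D ω = false} ∩ F) ∩ {ω | A ω = a'} := by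
        intro a'; ext ω
        simp only [Set.mem_inter_iff, Set.mem_setOf_eq]
        tauto
      rw [← pr_tsum_fiber (E := {ω | D ω = false} ∩ F) hA ((msE hD false).inter hF)]
      exact tsum_congr fun a' => by rw [hset a']
    have heq : pr P ({ω | Y0 ω = y ∧ D ω = false} ∩ F)
        = pr P ({ω | Y0 ω = y} ∩ F) / pr P F * pr P ({ω | D ω = false} ∩ F) := by
      rw [hL, hR]
      calc ∑' a', pr P ({ω | Y0 ω = y ∧ A ω = a' ∧ D ω = false} ∩ F)
          = ∑' a', pr P ({ω | Y0 ω = y} ∩ F) / pr P F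
              * pr P ({ω | A ω = a' ∧ D ω = false} ∩ F) := tsum_congr (fun a' => key false a')
        _ = _ := tsum_mul_left
    rw [heq]; field_simp
  · have hsplitL : {ω | Y0 ω = y ∧ A ω = a} ∩ F
        = ({ω | Y0 ω = y ∧ A ω = a ∧ D ω = false} ∩ F)
          ∪ ({ω | Y0 ω = y ∧ A ω = a ∧ D ω = true} ∩ F) := by
      ext ω
      simp only [Set.mem_inter_iff, Set.mem_union, Set.mem_setOf_eq]
      constructor
      · intro h
        cases hb : D ω
        · exact Or.inl ⟨⟨h.1.1, h.1.2, rfl⟩, h.2⟩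
        · exact Or.inr ⟨⟨h.1.1, h.1.2, rfl⟩, h.2⟩
      · rintro (h | h) <;> exact ⟨⟨h.1.1, h.1.2.1⟩, h.2⟩
    have hsplitR : {ω | A ω = a} ∩ F
        = ({ω | A ω = a ∧ D ω = false} ∩ F) ∪ ({ω | A ω = a ∧ D ω = true} ∩ F) := by
      ext ω
      simp only [Set.mem_inter_iff, Set.mem_union, Set.mem_setOf_eq]
      constructor
      · intro h
        cases hb : D ω
        · exact Or.inl ⟨⟨h.1, rfl⟩, h.2⟩
        · exact Or.inr ⟨⟨h.1, rfl⟩, h.2⟩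
      · rintro (h | h) <;> exact ⟨h.1.1, h.2⟩
    have hdL : Disjoint ({ω | Y0 ω = y ∧ A ω = a ∧ D ω = false} ∩ F)
        ({ω | Y0 ω = y ∧ A ω = a ∧ D ω = true} ∩ F) := by
      simp only [Set.disjoint_left]
      intro ω h1 h2
      exact absurd (h1.1.2.2.symm.trans h2.1.2.2) (by simp)
    have hdR : Disjoint ({ω | A ω = a ∧ D ω = false} ∩ F)
        ({ω | A ω = a ∧ D ω = true} ∩ F) := by
      simp only [Set.disjoint_left]
      intro ω h1 h2
      exact absurd (h1.1.2.symm.trans h2.1.2) (by simp)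
    have hmL : MeasurableSet ({ω | Y0 ω = y ∧ A ω = a ∧ D ω = true} ∩ F) :=
      ((msE hY0 y).inter ((msE hA a).inter (msE hD true))).inter hF
    have hmR : MeasurableSet ({ω | A ω = a ∧ D ω = true} ∩ F) :=
      ((msE hA a).inter (msE hD true)).inter hF
    rw [hsplitL, hsplitR, pr_union hmL hdL, pr_union hmR hdR, key false a, key true a]
    field_simp

/-- under consistency, conditional independence of `Y⁰` and `(A, D)` given `(X, S)`
and given `X`, and positivity given `(X, S)` and given `X`, the conditional-probability ratio
appearing in the factored counterfactual error rates is identified from observed data: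
`P(A=a | Y⁰=y, S=s) / P(A=a | Y⁰=y) =
  (E[μ₀(y,s,X)·1{A=a}·1{S=s}] / E[μ₀(y,s,X)·1{S=s}]) / (E[μ₀*(y,X)·h(X,a)] / E[μ₀*(y,X)])`,
where `μ₀(y,s,x) = P(Y=y | D=0, S=s, X=x)`, `μ₀*(y,x) = P(Y=y | D=0, X=x)`, and
`h(x,a) = P(A=a | X=x)`.
Binary variables are modelled as `Bool`-valued, with `1 = true` and `0 = false`. -/
theorem stmt_9
    {Ω 𝒜 𝒳 : Type*} [MeasurableSpace Ω]
    [MeasurableSpace 𝒜] [MeasurableSingletonClass 𝒜] [Countable 𝒜] [Nonempty 𝒜]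
    [MeasurableSpace 𝒳] [MeasurableSingletonClass 𝒳] [Countable 𝒳] [Nonempty 𝒳]
    (P : Measure Ω) [IsProbabilityMeasure P]
    (Y0 Y D S : Ω → Bool) (A : Ω → 𝒜) (X : Ω → 𝒳)
    (hY0 : Measurable Y0) (hY : Measurable Y) (hD : Measurable D) (hS : Measurable S)
    (hA : Measurable A) (hX : Measurable X)
    (y s : Bool) (a : 𝒜)
    (hpos1 : 0 < pr P {ω | Y0 ω = y ∧ S ω = s})
    (hpos2 : 0 < pr P {ω | A ω = a ∧ Y0 ω = y})
    (hcons : ∀ᵐ ω ∂P, D ω = false → Y ω = Y0 ω)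
    (hCIS : ∀ (y' d : Bool) (a' : 𝒜) (x : 𝒳) (s' : Bool),
      0 < pr P {ω | X ω = x ∧ S ω = s'} →
      cpr P {ω | Y0 ω = y' ∧ A ω = a' ∧ D ω = d} {ω | X ω = x ∧ S ω = s'} =
        cpr P {ω | Y0 ω = y'} {ω | X ω = x ∧ S ω = s'} *
          cpr P {ω | A ω = a' ∧ D ω = d} {ω | X ω = x ∧ S ω = s'})
    (hCIX : ∀ (y' d : Bool) (a' : 𝒜) (x : 𝒳), 0 < pr P {ω | X ω = x} →
      cpr P {ω | Y0 ω = y' ∧ A ω = a' ∧ D ω = d} {ω | X ω = x} =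
        cpr P {ω | Y0 ω = y'} {ω | X ω = x} *
          cpr P {ω | A ω = a' ∧ D ω = d} {ω | X ω = x})
    (hposDS : ∀ (s' : Bool) (x : 𝒳), 0 < pr P {ω | S ω = s' ∧ X ω = x} →
      0 < pr P {ω | D ω = false ∧ S ω = s' ∧ X ω = x})
    (hposDX : ∀ x : 𝒳, 0 < pr P {ω | X ω = x} →
      0 < pr P {ω | D ω = false ∧ X ω = x}) :
    cpr P {ω | A ω = a} {ω | Y0 ω = y ∧ S ω = s} / cpr P {ω | A ω = a} {ω | Y0 ω = y} =
      ((∑' x : 𝒳,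
          cpr P {ω | Y ω = y} {ω | D ω = false ∧ S ω = s ∧ X ω = x} *
            pr P {ω | A ω = a ∧ S ω = s ∧ X ω = x}) /
        (∑' x : 𝒳,
            cpr P {ω | Y ω = y} {ω | D ω = false ∧ S ω = s ∧ X ω = x} *
              pr P {ω | S ω = s ∧ X ω = x})) /
      ((∑' x : 𝒳,
          cpr P {ω | Y ω = y} {ω | D ω = false ∧ X ω = x} *
            cpr P {ω | A ω = a} {ω | X ω = x} * pr P {ω | X ω = x}) /
        (∑' x : 𝒳,
            cpr P {ω | Y ω = y} {ω | D ω = false ∧ X ω = x} * pr P {ω | X ω = x})) := by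
  classical
  -- consistency transfer
  have hYY0 : ∀ (G : Set Ω), G ⊆ {ω | D ω = false} →
      pr P ({ω | Y ω = y} ∩ G) = pr P ({ω | Y0 ω = y} ∩ G) := by
    intro G hG
    have hae : ({ω | Y ω = y} ∩ G : Set Ω) =ᵐ[P] ({ω | Y0 ω = y} ∩ G : Set Ω) := by
      rw [Filter.eventuallyEq_set]
      filter_upwards [hcons] with ω hω
      simp only [Set.mem_inter_iff, Set.mem_setOf_eq]
      constructor
      · rintro ⟨h1, h2⟩; exact ⟨(hω (hG h2)).symm.trans h1, h2⟩
      · rintro ⟨h1, h2⟩; exact ⟨(hω (hG h2)).trans h1, h2⟩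
    unfold pr
    rw [measure_congr hae]
  -- S-part claims
  have claim1 : ∀ x : 𝒳,
      cpr P {ω | Y ω = y} {ω | D ω = false ∧ S ω = s ∧ X ω = x} *
          pr P {ω | A ω = a ∧ S ω = s ∧ X ω = x}
        = pr P ({ω | Y0 ω = y ∧ A ω = a ∧ S ω = s} ∩ {ω | X ω = x}) := by
    intro x
    have hsetDSX : {ω | D ω = false ∧ S ω = s ∧ X ω = x}
        = {ω | D ω = false} ∩ {ω | X ω = x ∧ S ω = s} := by
      ext ω; simp only [Set.mem_inter_iff, Set.mem_setOf_eq]; tauto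
    have hsetASX : {ω | A ω = a ∧ S ω = s ∧ X ω = x}
        = {ω | A ω = a} ∩ {ω | X ω = x ∧ S ω = s} := by
      ext ω; simp only [Set.mem_inter_iff, Set.mem_setOf_eq]; tauto
    have hsetT : {ω | Y0 ω = y ∧ A ω = a ∧ S ω = s} ∩ {ω | X ω = x}
        = {ω | Y0 ω = y ∧ A ω = a} ∩ {ω | X ω = x ∧ S ω = s} := by
      ext ω; simp only [Set.mem_inter_iff, Set.mem_setOf_eq]; tauto
    by_cases hx : pr P {ω | X ω = x ∧ S ω = s} = 0
    · rw [hsetASX, hsetT, pr_eq_zero_of_subset Set.inter_subset_right hx,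
        pr_eq_zero_of_subset Set.inter_subset_right hx, mul_zero]
    · have hxpos : 0 < pr P {ω | X ω = x ∧ S ω = s} :=
        lt_of_le_of_ne (pr_nonneg _) (Ne.symm hx)
      obtain ⟨CI1, CI2⟩ := ci_factor P Y0 D A hY0 hD hA {ω | X ω = x ∧ S ω = s}
        ((msE hX x).inter (msE hS s)) hxpos y a (fun d a' => hCIS y d a' x s hxpos)
      have hq : 0 < pr P ({ω | D ω = false} ∩ {ω | X ω = x ∧ S ω = s}) := by
        have he : {ω | S ω = s ∧ X ω = x} = {ω | X ω = x ∧ S ω = s} := by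
          ext ω; simp only [Set.mem_setOf_eq]; tauto
        have := hposDS s x (by rw [he]; exact hxpos)
        rwa [hsetDSX] at this
      have hY0D : {ω | Y0 ω = y} ∩ ({ω | D ω = false} ∩ {ω | X ω = x ∧ S ω = s})
          = {ω | Y0 ω = y ∧ D ω = false} ∩ {ω | X ω = x ∧ S ω = s} := by
        ext ω; simp only [Set.mem_inter_iff, Set.mem_setOf_eq]; tauto
      have hcpr : cpr P {ω | Y ω = y} {ω | D ω = false ∧ S ω = s ∧ X ω = x}
          = pr P ({ω | Y0 ω = y} ∩ {ω | X ω = x ∧ S ω = s})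
              / pr P {ω | X ω = x ∧ S ω = s} := by
        unfold cpr
        rw [hsetDSX, hYY0 _ Set.inter_subset_left, hY0D]
        rw [div_eq_div_iff (ne_of_gt hq) hx]
        linarith [CI1]
      rw [hcpr, hsetASX, hsetT]
      rw [div_mul_eq_mul_div, eq_comm, eq_div_iff hx]
      linarith [CI2]
  have claim2 : ∀ x : 𝒳,
      cpr P {ω | Y ω = y} {ω | D ω = false ∧ S ω = s ∧ X ω = x} *
          pr P {ω | S ω = s ∧ X ω = x}
        = pr P ({ω | Y0 ω = y ∧ S ω = s} ∩ {ω | X ω = x}) := by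
    intro x
    have he : {ω | S ω = s ∧ X ω = x} = {ω | X ω = x ∧ S ω = s} := by
      ext ω; simp only [Set.mem_setOf_eq]; tauto
    have hsetDSX : {ω | D ω = false ∧ S ω = s ∧ X ω = x}
        = {ω | D ω = false} ∩ {ω | X ω = x ∧ S ω = s} := by
      ext ω; simp only [Set.mem_inter_iff, Set.mem_setOf_eq]; tauto
    have hsetT : {ω | Y0 ω = y ∧ S ω = s} ∩ {ω | X ω = x}
        = {ω | Y0 ω = y} ∩ {ω | X ω = x ∧ S ω = s} := by
      ext ω; simp only [Set.mem_inter_iff, Set.mem_setOf_eq]; tauto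
    by_cases hx : pr P {ω | X ω = x ∧ S ω = s} = 0
    · rw [he, hsetT, hx, pr_eq_zero_of_subset Set.inter_subset_right hx, mul_zero]
    · have hxpos : 0 < pr P {ω | X ω = x ∧ S ω = s} :=
        lt_of_le_of_ne (pr_nonneg _) (Ne.symm hx)
      obtain ⟨CI1, CI2⟩ := ci_factor P Y0 D A hY0 hD hA {ω | X ω = x ∧ S ω = s}
        ((msE hX x).inter (msE hS s)) hxpos y a (fun d a' => hCIS y d a' x s hxpos)
      have hq : 0 < pr P ({ω | D ω = false} ∩ {ω | X ω = x ∧ S ω = s}) := by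
        have := hposDS s x (by rw [he]; exact hxpos)
        rwa [hsetDSX] at this
      have hY0D : {ω | Y0 ω = y} ∩ ({ω | D ω = false} ∩ {ω | X ω = x ∧ S ω = s})
          = {ω | Y0 ω = y ∧ D ω = false} ∩ {ω | X ω = x ∧ S ω = s} := by
        ext ω; simp only [Set.mem_inter_iff, Set.mem_setOf_eq]; tauto
      have hcpr : cpr P {ω | Y ω = y} {ω | D ω = false ∧ S ω = s ∧ X ω = x}
          = pr P ({ω | Y0 ω = y} ∩ {ω | X ω = x ∧ S ω = s})
              / pr P {ω | X ω = x ∧ S ω = s} := by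
        unfold cpr
        rw [hsetDSX, hYY0 _ Set.inter_subset_left, hY0D]
        rw [div_eq_div_iff (ne_of_gt hq) hx]
        linarith [CI1]
      rw [hcpr, he, hsetT]
      exact div_mul_cancel₀ _ hx
  -- X-part claims
  have claim3 : ∀ x : 𝒳,
      cpr P {ω | Y ω = y} {ω | D ω = false ∧ X ω = x} *
          cpr P {ω | A ω = a} {ω | X ω = x} * pr P {ω | X ω = x}
        = pr P ({ω | Y0 ω = y ∧ A ω = a} ∩ {ω | X ω = x}) := by
    intro x
    have hsetDX : {ω | D ω = false ∧ X ω = x}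
        = {ω | D ω = false} ∩ {ω | X ω = x} := by
      ext ω; simp only [Set.mem_inter_iff, Set.mem_setOf_eq]
    by_cases hx : pr P {ω | X ω = x} = 0
    · rw [hx, mul_zero, pr_eq_zero_of_subset Set.inter_subset_right hx]
    · have hxpos : 0 < pr P {ω | X ω = x} :=
        lt_of_le_of_ne (pr_nonneg _) (Ne.symm hx)
      obtain ⟨CI1, CI2⟩ := ci_factor P Y0 D A hY0 hD hA {ω | X ω = x}
        (msE hX x) hxpos y a (fun d a' => hCIX y d a' x hxpos)
      have hq : 0 < pr P ({ω | D ω = false} ∩ {ω | X ω = x}) := by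
        have := hposDX x hxpos
        rwa [hsetDX] at this
      have hY0D : {ω | Y0 ω = y} ∩ ({ω | D ω = false} ∩ {ω | X ω = x})
          = {ω | Y0 ω = y ∧ D ω = false} ∩ {ω | X ω = x} := by
        ext ω; simp only [Set.mem_inter_iff, Set.mem_setOf_eq]; tauto
      have hcpr : cpr P {ω | Y ω = y} {ω | D ω = false ∧ X ω = x}
          = pr P ({ω | Y0 ω = y} ∩ {ω | X ω = x}) / pr P {ω | X ω = x} := by
        unfold cpr
        rw [hsetDX, hYY0 _ Set.inter_subset_left, hY0D]
        rw [div_eq_div_iff (ne_of_gt hq) hx]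
        linarith [CI1]
      have hcprA : cpr P {ω | A ω = a} {ω | X ω = x}
          = pr P ({ω | A ω = a} ∩ {ω | X ω = x}) / pr P {ω | X ω = x} := rfl
      rw [hcpr, hcprA]
      rw [div_mul_div_comm, div_mul_eq_mul_div, eq_comm,
        eq_div_iff (mul_ne_zero hx hx)]
      nlinarith [CI2]
  have claim4 : ∀ x : 𝒳,
      cpr P {ω | Y ω = y} {ω | D ω = false ∧ X ω = x} * pr P {ω | X ω = x}
        = pr P ({ω | Y0 ω = y} ∩ {ω | X ω = x}) := by
    intro x
    have hsetDX : {ω | D ω = false ∧ X ω = x}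
        = {ω | D ω = false} ∩ {ω | X ω = x} := by
      ext ω; simp only [Set.mem_inter_iff, Set.mem_setOf_eq]
    by_cases hx : pr P {ω | X ω = x} = 0
    · rw [hx, mul_zero, pr_eq_zero_of_subset Set.inter_subset_right hx]
    · have hxpos : 0 < pr P {ω | X ω = x} :=
        lt_of_le_of_ne (pr_nonneg _) (Ne.symm hx)
      obtain ⟨CI1, CI2⟩ := ci_factor P Y0 D A hY0 hD hA {ω | X ω = x}
        (msE hX x) hxpos y a (fun d a' => hCIX y d a' x hxpos)
      have hq : 0 < pr P ({ω | D ω = false} ∩ {ω | X ω = x}) := by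
        have := hposDX x hxpos
        rwa [hsetDX] at this
      have hY0D : {ω | Y0 ω = y} ∩ ({ω | D ω = false} ∩ {ω | X ω = x})
          = {ω | Y0 ω = y ∧ D ω = false} ∩ {ω | X ω = x} := by
        ext ω; simp only [Set.mem_inter_iff, Set.mem_setOf_eq]; tauto
      have hcpr : cpr P {ω | Y ω = y} {ω | D ω = false ∧ X ω = x}
          = pr P ({ω | Y0 ω = y} ∩ {ω | X ω = x}) / pr P {ω | X ω = x} := by
        unfold cpr
        rw [hsetDX, hYY0 _ Set.inter_subset_left, hY0D]
        rw [div_eq_div_iff (ne_of_gt hq) hx]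
        linarith [CI1]
      rw [hcpr]
      exact div_mul_cancel₀ _ hx
  -- sums
  have hs1 : (∑' x : 𝒳,
      cpr P {ω | Y ω = y} {ω | D ω = false ∧ S ω = s ∧ X ω = x} *
        pr P {ω | A ω = a ∧ S ω = s ∧ X ω = x})
      = pr P {ω | Y0 ω = y ∧ A ω = a ∧ S ω = s} :=
    (tsum_congr claim1).trans
      (pr_tsum_fiber hX ((msE hY0 y).inter ((msE hA a).inter (msE hS s))))
  have hs2 : (∑' x : 𝒳,
      cpr P {ω | Y ω = y} {ω | D ω = false ∧ S ω = s ∧ X ω = x} *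
        pr P {ω | S ω = s ∧ X ω = x})
      = pr P {ω | Y0 ω = y ∧ S ω = s} :=
    (tsum_congr claim2).trans (pr_tsum_fiber hX ((msE hY0 y).inter (msE hS s)))
  have hs3 : (∑' x : 𝒳,
      cpr P {ω | Y ω = y} {ω | D ω = false ∧ X ω = x} *
        cpr P {ω | A ω = a} {ω | X ω = x} * pr P {ω | X ω = x})
      = pr P {ω | Y0 ω = y ∧ A ω = a} :=
    (tsum_congr claim3).trans (pr_tsum_fiber hX ((msE hY0 y).inter (msE hA a)))
  have hs4 : (∑' x : 𝒳,
      cpr P {ω | Y ω = y} {ω | D ω = false ∧ X ω = x} * pr P {ω | X ω = x})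
      = pr P {ω | Y0 ω = y} :=
    (tsum_congr claim4).trans (pr_tsum_fiber hX (msE hY0 y))
  rw [hs1, hs2, hs3, hs4]
  unfold cpr
  have e1 : {ω | A ω = a} ∩ {ω | Y0 ω = y ∧ S ω = s}
      = {ω | Y0 ω = y ∧ A ω = a ∧ S ω = s} := by
    ext ω; simp only [Set.mem_inter_iff, Set.mem_setOf_eq]; tauto
  have e2 : {ω | A ω = a} ∩ {ω | Y0 ω = y} = {ω | Y0 ω = y ∧ A ω = a} := by
    ext ω; simp only [Set.mem_inter_iff, Set.mem_setOf_eq]; tauto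
  rw [e1, e2]
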